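/- Let λ1, λ2, λ3 ∈ ℂ and x1, y1, z1 ∈ ℂ satisfy x1 ≠ 0, y1 − λ3·x1² ≠ 0, and (λ2 + x1 + x1²)·y1 + z1 ≠ 0. Suppose z1² = 4y1³ + a1·y1² + a2·y1, where a1 = λ2² + 2λ2·x1(1 + x1) + x1²(−4λ1 − 4λ3 + (1 + x1)²) and a2 = 4λ1λ3·x1⁴. Define x = 2y1(y1 − λ3x1²)/(x1((λ2 + x1 + x1²)y1 + z1)), y = x1, and z = −((λ2 + x1 + x1²)y1 + z1)/(2x1(y1 − λ3x1²)). Then x·y·z·(x + y + z + 1) + λ1·x·y + λ2·x·z + λ3·y·z = 0. -/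
import Mathlib

set_option maxHeartbeats 1000000 in
theorem stmt_13 (l1 l2 l3 x1 y1 z1 : ℂ)
    (hx1 : x1 ≠ 0) (hd1 : y1 - l3 * x1 ^ 2 ≠ 0)
    (hd2 : (l2 + x1 + x1 ^ 2) * y1 + z1 ≠ 0)
    (heq : z1 ^ 2 = 4 * y1 ^ 3
      + (l2 ^ 2 + 2 * l2 * x1 * (1 + x1) + x1 ^ 2 * (-4 * l1 - 4 * l3 + (1 + x1) ^ 2)) * y1 ^ 2
      + (4 * l1 * l3 * x1 ^ 4) * y1) :
    let x := 2 * y1 * (y1 - l3 * x1 ^ 2) / (x1 * ((l2 + x1 + x1 ^ 2) * y1 + z1))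
    let y := x1
    let z := -(((l2 + x1 + x1 ^ 2) * y1 + z1) / (2 * x1 * (y1 - l3 * x1 ^ 2)))
    x * y * z * (x + y + z + 1) + l1 * x * y + l2 * x * z + l3 * y * z = 0 := by
  intro x y z
  have hD1 : x1 * ((l2 + x1 + x1 ^ 2) * y1 + z1) ≠ 0 := mul_ne_zero hx1 hd2
  have hD2 : 2 * x1 * (y1 - l3 * x1 ^ 2) ≠ 0 :=
    mul_ne_zero (mul_ne_zero two_ne_zero hx1) hd1
  have hx : x * (x1 * ((l2 + x1 + x1 ^ 2) * y1 + z1)) = 2 * y1 * (y1 - l3 * x1 ^ 2) :=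
    div_mul_cancel₀ _ hD1
  have hz : z * (2 * x1 * (y1 - l3 * x1 ^ 2)) = -((l2 + x1 + x1 ^ 2) * y1 + z1) := by
    show -(((l2 + x1 + x1 ^ 2) * y1 + z1) / (2 * x1 * (y1 - l3 * x1 ^ 2)))
        * (2 * x1 * (y1 - l3 * x1 ^ 2)) = _
    rw [neg_mul, div_mul_cancel₀ _ hD2]
  have key : (x * x1 * z * (x + x1 + z + 1) + l1 * x * x1 + l2 * x * z + l3 * x1 * z)
      * ((x1 * ((l2 + x1 + x1 ^ 2) * y1 + z1)) ^ 2 * (2 * x1 * (y1 - l3 * x1 ^ 2)) ^ 2) = 0 := by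
    linear_combination ((8)*x1^3*y1^4*z + (4)*x1^4*y1^2*z1*z + (4)*x1^4*y1^2*z1*z^2 + (4)*x1^4*y1^2*z1*x*z + (4)*x1^5*y1^2*z1*z + (4)*x1^5*y1^3*z + (4)*x1^5*y1^3*z^2 + (4)*x1^5*y1^3*x*z + (8)*x1^6*y1^3*z + (4)*x1^6*y1^3*z^2 + (4)*x1^6*y1^3*x*z + (4)*x1^7*y1^3*z + (-24)*l3*x1^5*y1^3*z + (-8)*l3*x1^6*y1*z1*z + (-8)*l3*x1^6*y1*z1*z^2 + (-8)*l3*x1^6*y1*z1*x*z + (-8)*l3*x1^7*y1*z1*z + (-8)*l3*x1^7*y1^2*z + (-8)*l3*x1^7*y1^2*z^2 + (-8)*l3*x1^7*y1^2*x*z + (-16)*l3*x1^8*y1^2*z + (-8)*l3*x1^8*y1^2*z^2 + (-8)*l3*x1^8*y1^2*x*z + (-8)*l3*x1^9*y1^2*z + (24)*l3^2*x1^7*y1^2*z + (4)*l3^2*x1^8*z1*z + (4)*l3^2*x1^8*z1*z^2 + (4)*l3^2*x1^8*z1*x*z + (4)*l3^2*x1^9*z1*z + (4)*l3^2*x1^9*y1*z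 + (4)*l3^2*x1^9*y1*z^2 + (4)*l3^2*x1^9*y1*x*z + (8)*l3^2*x1^10*y1*z + (4)*l3^2*x1^10*y1*z^2 + (4)*l3^2*x1^10*y1*x*z + (4)*l3^2*x1^11*y1*z + (-8)*l3^3*x1^9*y1*z + (4)*l2*x1^3*y1^2*z1*z + (8)*l2*x1^4*y1^3*z + (4)*l2*x1^4*y1^3*z^2 + (4)*l2*x1^4*y1^3*x*z + (8)*l2*x1^5*y1^3*z + (-8)*l2*l3*x1^5*y1*z1*z + (-16)*l2*l3*x1^6*y1^2*z + (-8)*l2*l3*x1^6*y1^2*z^2 + (-8)*l2*l3*x1^6*y1^2*x*z + (-16)*l2*l3*x1^7*y1^2*z + (4)*l2*l3^2*x1^7*z1*z + (8)*l2*l3^2*x1^8*y1*z + (4)*l2*l3^2*x1^8*y1*z^2 + (4)*l2*l3^2*x1^8*y1*x*z + (8)*l2*l3^2*x1^9*y1*z + (4)*l2^2*x1^3*y1^3*z + (-8)*l2^2*l3*x1^5*y1^2*z + (4)*l2^2*l3^2*x1^7*y1*z + (4)*l1*x1^4*y1^2*z1 + (4)*l1*x1^5*y1^3 + (4)*l1*x1^6*y1^3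 + (-8)*l1*l3*x1^6*y1*z1 + (-8)*l1*l3*x1^7*y1^2 + (-8)*l1*l3*x1^8*y1^2 + (4)*l1*l3^2*x1^8*z1 + (4)*l1*l3^2*x1^9*y1 + (4)*l1*l3^2*x1^10*y1 + (4)*l1*l2*x1^4*y1^3 + (-8)*l1*l2*l3*x1^6*y1^2 + (4)*l1*l2*l3^2*x1^8*y1) * hx + ((-2)*x1^2*y1^2*z1^2 + (8)*x1^2*y1^5 + (4)*x1^3*y1^3*z1*z + (2)*x1^4*y1^4 + (4)*x1^4*y1^4*z + (4)*x1^5*y1^4 + (4)*x1^5*y1^4*z + (2)*x1^6*y1^4 + (4)*l3*x1^4*y1*z1^2 + (-24)*l3*x1^4*y1^4 + (-8)*l3*x1^5*y1^2*z1*z + (-4)*l3*x1^6*y1^3 + (-8)*l3*x1^6*y1^3*z + (-8)*l3*x1^7*y1^3 + (-8)*l3*x1^7*y1^3*z + (-4)*l3*x1^8*y1^3 + (-2)*l3^2*x1^6*z1^2 + (24)*l3^2*x1^6*y1^3 + (4)*l3^2*x1^7*y1*z1*z + (2)*l3^2*x1^8*y1^2 + (4)*l3^2*x1^8*y1^2*z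 + (4)*l3^2*x1^9*y1^2 + (4)*l3^2*x1^9*y1^2*z + (2)*l3^2*x1^10*y1^2 + (-8)*l3^3*x1^8*y1^2 + (4)*l2*x1^3*y1^4 + (4)*l2*x1^3*y1^4*z + (4)*l2*x1^4*y1^4 + (-8)*l2*l3*x1^5*y1^3 + (-8)*l2*l3*x1^5*y1^3*z + (-8)*l2*l3*x1^6*y1^3 + (4)*l2*l3^2*x1^7*y1^2 + (4)*l2*l3^2*x1^7*y1^2*z + (4)*l2*l3^2*x1^8*y1^2 + (2)*l2^2*x1^2*y1^4 + (-4)*l2^2*l3*x1^4*y1^3 + (2)*l2^2*l3^2*x1^6*y1^2) * hz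
      + ((x1 * ((l2 + x1 + x1 ^ 2) * y1 + z1)) * (2 * x1 * (y1 - l3 * x1 ^ 2))
          * (y1 - l3 * x1 ^ 2)) * heq
  have h := (mul_eq_zero.mp key).resolve_right
    (mul_ne_zero (pow_ne_zero 2 hD1) (pow_ne_zero 2 hD2))
  exact h
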